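/- Let (C,⊗,I) be a symmetric monoidal category in which every object X carries a counital comagma structure (δ_X : X → X⊗X, ε_X : X → I), every morphism is a comagma homomorphism (f ; δ_Y = δ_X ; (f ⊗ f) and f ; ε_Y = ε_X), and the structure is uniform (ε_{X⊗Y} = ε_X ⊗ ε_Y, ε_I = id_I, δ_I = id, δ_{X⊗Y} = (δ_X ⊗ δ_Y) ; (id ⊗ σ_{X,Y} ⊗ id)). Then every comultiplication is cocommutative, δ_X ; σ_{X,X} = δ_X, and coassociative, δ_X ; (δ_X ⊗ id_X) ; α = δ_X ; (id_X ⊗ δ_X); hence every object (X, δ_X, ε_X) is a cocommutative comonoid. -/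

import Mathlib

/-!
STATEMENT 4: A uniform natural counital comagma structure is cocommutative and
coassociative; hence every object is a cocommutative comonoid.
-/

open CategoryTheory CategoryTheory.MonoidalCategory

universe v u

variable {C : Type u} [Category.{v} C] [MonoidalCategory C] [SymmetricCategory C]

set_option maxHeartbeats 1000000

private lemma struct1 (B D : C) :
    ((λ_ B).inv ⊗ₘ (ρ_ D).inv) ≫ tensorμ (𝟙_ C) B D (𝟙_ C) ≫ ((λ_ D).hom ⊗ₘ (ρ_ B).hom) =
      (β_ B D).hom := by
  calc _ = 𝟙 _ ⊗≫ (β_ B D).hom ⊗≫ 𝟙 _ := by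
        simp [tensorμ, MonoidalCategory.tensorHom_def]; monoidal
    _ = _ := by monoidal

private lemma struct2 (A B D : C) :
    ((A ⊗ B) ◁ (λ_ D).inv) ≫ tensorμ A B (𝟙_ C) D ≫ ((ρ_ A).hom ⊗ₘ 𝟙 (B ⊗ D)) =
      (α_ A B D).hom := by
  simp [tensorμ, MonoidalCategory.tensorHom_def, braiding_tensorUnit_right]
  monoidal

/-- If every object of a symmetric monoidal category carries a counital comagma structure
`(δ_X, ε_X)`, every morphism is a comagma homomorphism, and the structure is uniform,
then every comultiplication is cocommutative (`δ_X ; σ_{X,X} = δ_X`) and coassociative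
(`δ_X ; (δ_X ⊗ id) ; α = δ_X ; (id ⊗ δ_X)`); hence every object is a cocommutative
comonoid. -/
theorem comagma_cocomm_coassoc
    (δ : ∀ X : C, X ⟶ X ⊗ X) (ε : ∀ X : C, X ⟶ 𝟙_ C)
    -- counitality (up to unitors)
    (counit_right : ∀ X : C, δ X ≫ (X ◁ ε X) ≫ (ρ_ X).hom = 𝟙 X)
    (counit_left : ∀ X : C, δ X ≫ (ε X ▷ X) ≫ (λ_ X).hom = 𝟙 X)
    -- every morphism is a comagma homomorphism
    (hom_δ : ∀ (X Y : C) (f : X ⟶ Y), f ≫ δ Y = δ X ≫ (f ⊗ₘ f))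
    (hom_ε : ∀ (X Y : C) (f : X ⟶ Y), f ≫ ε Y = ε X)
    -- uniformity
    (unif_ε : ∀ X Y : C, ε (X ⊗ Y) = (ε X ⊗ₘ ε Y) ≫ (λ_ (𝟙_ C)).hom)
    (unif_εI : ε (𝟙_ C) = 𝟙 (𝟙_ C))
    (unif_δI : δ (𝟙_ C) = (λ_ (𝟙_ C)).inv)
    (unif_δ : ∀ X Y : C, δ (X ⊗ Y) = (δ X ⊗ₘ δ Y) ≫ tensorμ X X Y Y) :
    ∀ X : C,
      (δ X ≫ (β_ X X).hom = δ X) ∧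
      (δ X ≫ (δ X ▷ X) ≫ (α_ X X X).hom = δ X ≫ (X ◁ δ X)) := by
  intro X
  have cl : δ X ≫ (ε X ▷ X) = (λ_ X).inv := by
    rw [← cancel_mono (λ_ X).hom]; simpa using counit_left X
  have cr : δ X ≫ (X ◁ ε X) = (ρ_ X).inv := by
    rw [← cancel_mono (ρ_ X).hom]; simpa using counit_right X
  have E : δ X ≫ δ (X ⊗ X) = δ X ≫ (δ X ⊗ₘ δ X) := hom_δ X (X ⊗ X) (δ X)
  rw [unif_δ] at E
  have E2 : ∀ {Z : C} (h : ((X ⊗ X) ⊗ (X ⊗ X)) ⟶ Z),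
      δ X ≫ (δ X ⊗ₘ δ X) ≫ tensorμ X X X X ≫ h = δ X ≫ (δ X ⊗ₘ δ X) ≫ h := by
    intro Z h
    have := congrArg (· ≫ h) E
    simpa only [Category.assoc] using this
  constructor
  · calc δ X ≫ (β_ X X).hom
        = δ X ≫ ((λ_ X).inv ⊗ₘ (ρ_ X).inv) ≫ tensorμ (𝟙_ C) X X (𝟙_ C) ≫
            ((λ_ X).hom ⊗ₘ (ρ_ X).hom) := by rw [struct1]
      _ = δ X ≫ ((δ X ≫ (ε X ▷ X)) ⊗ₘ (δ X ≫ (X ◁ ε X))) ≫ tensorμ (𝟙_ C) X X (𝟙_ C) ≫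
            ((λ_ X).hom ⊗ₘ (ρ_ X).hom) := by rw [cl, cr]
      _ = δ X ≫ (δ X ⊗ₘ δ X) ≫ ((ε X ⊗ₘ 𝟙 X) ⊗ₘ (𝟙 X ⊗ₘ ε X)) ≫ tensorμ (𝟙_ C) X X (𝟙_ C) ≫
            ((λ_ X).hom ⊗ₘ (ρ_ X).hom) := by
          rw [tensorHom_comp_tensorHom_assoc]
          simp only [tensorHom_id, id_tensorHom, Category.comp_id, Category.id_comp]
      _ = δ X ≫ (δ X ⊗ₘ δ X) ≫ tensorμ X X X X ≫ ((ε X ⊗ₘ 𝟙 X) ⊗ₘ (𝟙 X ⊗ₘ ε X)) ≫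
            ((λ_ X).hom ⊗ₘ (ρ_ X).hom) := by rw [tensorμ_natural_assoc]
      _ = δ X ≫ (δ X ⊗ₘ δ X) ≫ ((ε X ⊗ₘ 𝟙 X) ⊗ₘ (𝟙 X ⊗ₘ ε X)) ≫
            ((λ_ X).hom ⊗ₘ (ρ_ X).hom) := E2 _
      _ = δ X ≫ ((δ X ≫ (ε X ▷ X) ≫ (λ_ X).hom) ⊗ₘ (δ X ≫ (X ◁ ε X) ≫ (ρ_ X).hom)) := by
          rw [tensorHom_comp_tensorHom_assoc, tensorHom_comp_tensorHom]
          simp only [tensorHom_id, id_tensorHom, Category.assoc]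
      _ = δ X := by rw [counit_left, counit_right]; simp
  · calc δ X ≫ (δ X ▷ X) ≫ (α_ X X X).hom
        = δ X ≫ (δ X ▷ X) ≫ ((X ⊗ X) ◁ (λ_ X).inv) ≫ tensorμ X X (𝟙_ C) X ≫
            ((ρ_ X).hom ⊗ₘ 𝟙 (X ⊗ X)) := by rw [struct2]
      _ = δ X ≫ (δ X ⊗ₘ δ X) ≫ ((𝟙 X ⊗ₘ 𝟙 X) ⊗ₘ (ε X ⊗ₘ 𝟙 X)) ≫ tensorμ X X (𝟙_ C) X ≫
            ((ρ_ X).hom ⊗ₘ 𝟙 (X ⊗ X)) := by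
          have hA : (δ X ▷ X) ≫ ((X ⊗ X) ◁ (λ_ X).inv) =
              (δ X ⊗ₘ δ X) ≫ ((𝟙 X ⊗ₘ 𝟙 X) ⊗ₘ (ε X ⊗ₘ 𝟙 X)) := by
            rw [← cl]
            rw [tensorHom_comp_tensorHom]
            simp [MonoidalCategory.tensorHom_def, id_tensorHom_id]
          rw [← Category.assoc (δ X ▷ X), hA]
          simp only [Category.assoc]
      _ = δ X ≫ (δ X ⊗ₘ δ X) ≫ tensorμ X X X X ≫ ((𝟙 X ⊗ₘ ε X) ⊗ₘ (𝟙 X ⊗ₘ 𝟙 X)) ≫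
            ((ρ_ X).hom ⊗ₘ 𝟙 (X ⊗ X)) := by rw [tensorμ_natural_assoc]
      _ = δ X ≫ (δ X ⊗ₘ δ X) ≫ ((𝟙 X ⊗ₘ ε X) ⊗ₘ (𝟙 X ⊗ₘ 𝟙 X)) ≫
            ((ρ_ X).hom ⊗ₘ 𝟙 (X ⊗ X)) := E2 _
      _ = δ X ≫ ((δ X ≫ (X ◁ ε X) ≫ (ρ_ X).hom) ⊗ₘ δ X) := by
          rw [tensorHom_comp_tensorHom_assoc, tensorHom_comp_tensorHom]
          simp only [tensorHom_id, id_tensorHom, id_tensorHom_id, Category.comp_id,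
            MonoidalCategory.id_whiskerRight, Category.assoc]
      _ = δ X ≫ (X ◁ δ X) := by rw [counit_right]; simp [MonoidalCategory.tensorHom_def]
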